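/- Fix n ≥ 1, τ_x > 0, τ_y > 0, and set γ = τ_x/(τ_x+τ_y). Let G be an n×n real matrix with nonnegative entries, zero diagonal, and row sums d_i^out = Σ_{j≠i} G i j < 1, let c = (I − γ·G)⁻¹ 𝟙, set b_i = (1−γ)·c_i, and let d_1^in = Σ_{j≠1} G j 1. Let ε_1, …, ε_n, ε_0 be jointly independent square-integrable real random variables with mean zero, Var(ε_i) = 1/τ_x for 1 ≤ i ≤ n and Var(ε_0) = 1/τ_y. Define X_i = (1−b_i)·ε_i + b_i·ε_0 for all i, and define X†_1 = γ·ε_1 + (1−γ)·ε_0 and X†_i = ε_i for i ≠ 1. Write u_i(Z) = −(1−d_i^out)·Z_i² − Σ_{j≠i} G i j·(Z_i − Z_j)². Then [ E[u_1(X)] < E[u_1(X†)] and Σ_i E[u_i(X†)] < Σ_i E[u_i(X)] ] holds if and only if both c_1² − Σ_{j≠1} G 1 j · c_j·(c_j − 2) < 1 and 1 + d_1^in < Σ_{i=1}^{n} c_i·( (1 − d_i^in)·c_i + 2·d_i^in ), where d_i^in = Σ_{j≠i} G j i. -/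

import Mathlib

open Matrix Finset MeasureTheory ProbabilityTheory

set_option maxHeartbeats 1600000

/-- Agent 1 strictly prefers withholding her signal while aggregate
welfare is strictly higher with public disclosure (inefficiently low information
sharing) if and only if `c_1² - Σ_{j≠1} g_1j c_j (c_j-2) < 1` and
`1 + d_1^in < Σ_i c_i ((1-d_i^in) c_i + 2 d_i^in)`. -/
theorem stmt15 (n : ℕ) (hn : 0 < n) (τx τy : ℝ) (hτx : 0 < τx) (hτy : 0 < τy)
    (γ : ℝ) (hγ : γ = τx / (τx + τy))
    (G : Matrix (Fin n) (Fin n) ℝ)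
    (hposG : ∀ i j, 0 ≤ G i j) (hdiag : ∀ i, G i i = 0)
    (hrow : ∀ i, ∑ j ∈ Finset.univ.erase i, G i j < 1)
    (c : Fin n → ℝ) (hc : c = (1 - γ • G)⁻¹ *ᵥ fun _ => 1)
    (b : Fin n → ℝ) (hb : ∀ i, b i = (1 - γ) * c i)
    (din : Fin n → ℝ) (hdin : ∀ i, din i = ∑ j ∈ Finset.univ.erase i, G j i)
    {Ω : Type*} [MeasurableSpace Ω] (μ : Measure Ω) [IsProbabilityMeasure μ]
    (ε : Option (Fin n) → Ω → ℝ)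
    (hindep : iIndepFun ε μ)
    (hL2 : ∀ k, MemLp (ε k) 2 μ)
    (hmean : ∀ k, ∫ ω, ε k ω ∂μ = 0)
    (hvarx : ∀ i : Fin n, variance (ε (some i)) μ = 1 / τx)
    (hvary : variance (ε none) μ = 1 / τy)
    (X Xd : Fin n → Ω → ℝ)
    (hX : ∀ i ω, X i ω = (1 - b i) * ε (some i) ω + b i * ε none ω)
    (hXd1 : ∀ ω, Xd ⟨0, hn⟩ ω = γ * ε (some ⟨0, hn⟩) ω + (1 - γ) * ε none ω)
    (hXdi : ∀ i, i ≠ ⟨0, hn⟩ → ∀ ω, Xd i ω = ε (some i) ω)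
    (U : (Fin n → Ω → ℝ) → Fin n → ℝ)
    (hU : ∀ Z i, U Z i = ∫ ω, (-(1 - ∑ j ∈ Finset.univ.erase i, G i j) * (Z i ω) ^ 2
        - ∑ j ∈ Finset.univ.erase i, G i j * (Z i ω - Z j ω) ^ 2) ∂μ) :
    (U X ⟨0, hn⟩ < U Xd ⟨0, hn⟩ ∧ ∑ i, U Xd i < ∑ i, U X i) ↔
      ((c ⟨0, hn⟩) ^ 2
          - ∑ j ∈ Finset.univ.erase ⟨0, hn⟩, G ⟨0, hn⟩ j * (c j * (c j - 2)) < 1 ∧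
        1 + din ⟨0, hn⟩ < ∑ i, c i * ((1 - din i) * c i + 2 * din i)) := by
  have hτxy : (0:ℝ) < τx + τy := by linarith
  have hγ0 : 0 < γ := by rw [hγ]; positivity
  have hγ1 : γ < 1 := by rw [hγ, div_lt_one hτxy]; linarith
  set e : Fin n := ⟨0, hn⟩ with he
  -- products of the noises are integrable
  have hmulI : ∀ k l, Integrable (fun ω => ε k ω * ε l ω) μ := by
    intro k l
    have h : (fun ω => ε k ω * ε l ω)
        = fun ω => ((ε k ω + ε l ω) ^ 2 - ε k ω ^ 2 - ε l ω ^ 2) / 2 := by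
      funext ω; ring
    rw [h]
    have h1 : Integrable (fun ω => (ε k ω + ε l ω) ^ 2) μ :=
      ((hL2 k).add (hL2 l)).integrable_sq
    exact ((h1.sub (hL2 k).integrable_sq).sub (hL2 l).integrable_sq).div_const 2
  have hEsq : ∀ k, ∫ ω, ε k ω * ε k ω ∂μ = variance (ε k) μ := by
    intro k
    have h1 := variance_eq_sub (hL2 k)
    rw [hmean k] at h1
    have h2 : (fun ω => ε k ω * ε k ω) = fun ω => (ε k ω) ^ 2 := by funext ω; ring
    calc ∫ ω, ε k ω * ε k ω ∂μ = ∫ ω, (ε k ω) ^ 2 ∂μ := by rw [h2]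
      _ = variance (ε k) μ := by rw [h1]; simp [Pi.pow_apply]
  have hEmul : ∀ k l, k ≠ l → ∫ ω, ε k ω * ε l ω ∂μ = 0 := by
    intro k l hkl
    have h := IndepFun.integral_fun_mul_eq_mul_integral (hindep.indepFun hkl)
      (hL2 k).1 (hL2 l).1
    have h2 : ∫ ω, ε k ω * ε l ω ∂μ = (∫ ω, ε k ω ∂μ) * ∫ ω, ε l ω ∂μ := h
    rw [h2, hmean k, hmean l, mul_zero]
  -- second moment of a combination of two noises
  have key2 : ∀ (k l : Option (Fin n)), k ≠ l → ∀ a b : ℝ,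
      ∫ ω, (a * ε k ω + b * ε l ω) ^ 2 ∂μ
        = a ^ 2 * variance (ε k) μ + b ^ 2 * variance (ε l) μ := by
    intro k l hkl a b
    have hx : (fun ω => (a * ε k ω + b * ε l ω) ^ 2)
        = fun ω => a ^ 2 * (ε k ω * ε k ω) + (b ^ 2 * (ε l ω * ε l ω)
            + (2 * a * b) * (ε k ω * ε l ω)) := by funext ω; ring
    have i1 : Integrable (fun ω => a ^ 2 * (ε k ω * ε k ω)) μ := (hmulI k k).const_mul _
    have i2 : Integrable (fun ω => b ^ 2 * (ε l ω * ε l ω)) μ := (hmulI l l).const_mul _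
    have i3 : Integrable (fun ω => (2 * a * b) * (ε k ω * ε l ω)) μ := (hmulI k l).const_mul _
    have i23 : Integrable (fun ω => b ^ 2 * (ε l ω * ε l ω)
        + (2 * a * b) * (ε k ω * ε l ω)) μ := i2.add i3
    rw [hx, integral_add i1 i23, integral_add i2 i3,
      integral_const_mul, integral_const_mul, integral_const_mul,
      hEsq, hEsq, hEmul k l hkl, mul_zero, add_zero]
  -- second moment of a combination of three noises
  have key3 : ∀ (k l m : Option (Fin n)), k ≠ l → k ≠ m → l ≠ m → ∀ a b d : ℝ,
      ∫ ω, (a * ε k ω + b * ε l ω + d * ε m ω) ^ 2 ∂μ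
        = a ^ 2 * variance (ε k) μ + b ^ 2 * variance (ε l) μ
          + d ^ 2 * variance (ε m) μ := by
    intro k l m hkl hkm hlm a b d
    have hx : (fun ω => (a * ε k ω + b * ε l ω + d * ε m ω) ^ 2)
        = fun ω => a ^ 2 * (ε k ω * ε k ω) + (b ^ 2 * (ε l ω * ε l ω)
            + (d ^ 2 * (ε m ω * ε m ω) + ((2 * a * b) * (ε k ω * ε l ω)
            + ((2 * a * d) * (ε k ω * ε m ω) + (2 * b * d) * (ε l ω * ε m ω))))) := by
      funext ω; ring
    have i1 : Integrable (fun ω => a ^ 2 * (ε k ω * ε k ω)) μ := (hmulI k k).const_mul _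
    have i2 : Integrable (fun ω => b ^ 2 * (ε l ω * ε l ω)) μ := (hmulI l l).const_mul _
    have i3 : Integrable (fun ω => d ^ 2 * (ε m ω * ε m ω)) μ := (hmulI m m).const_mul _
    have i4 : Integrable (fun ω => (2 * a * b) * (ε k ω * ε l ω)) μ := (hmulI k l).const_mul _
    have i5 : Integrable (fun ω => (2 * a * d) * (ε k ω * ε m ω)) μ := (hmulI k m).const_mul _
    have i6 : Integrable (fun ω => (2 * b * d) * (ε l ω * ε m ω)) μ := (hmulI l m).const_mul _
    have i56 : Integrable (fun ω => (2 * a * d) * (ε k ω * ε m ω)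
        + (2 * b * d) * (ε l ω * ε m ω)) μ := i5.add i6
    have i456 : Integrable (fun ω => (2 * a * b) * (ε k ω * ε l ω)
        + ((2 * a * d) * (ε k ω * ε m ω) + (2 * b * d) * (ε l ω * ε m ω))) μ := i4.add i56
    have i3456 : Integrable (fun ω => d ^ 2 * (ε m ω * ε m ω)
        + ((2 * a * b) * (ε k ω * ε l ω) + ((2 * a * d) * (ε k ω * ε m ω)
          + (2 * b * d) * (ε l ω * ε m ω)))) μ := i3.add i456
    have i23456 : Integrable (fun ω => b ^ 2 * (ε l ω * ε l ω) + (d ^ 2 * (ε m ω * ε m ω)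
        + ((2 * a * b) * (ε k ω * ε l ω) + ((2 * a * d) * (ε k ω * ε m ω)
          + (2 * b * d) * (ε l ω * ε m ω))))) μ := i2.add i3456
    rw [hx, integral_add i1 i23456, integral_add i2 i3456, integral_add i3 i456,
      integral_add i4 i56, integral_add i5 i6,
      integral_const_mul, integral_const_mul, integral_const_mul, integral_const_mul,
      integral_const_mul, integral_const_mul, hEsq, hEsq, hEsq,
      hEmul k l hkl, hEmul k m hkm, hEmul l m hlm]
    ring
  -- the general payoff formula for an action profile of the form
  -- `Z i = α i * ε i + β i * ε 0`
  have main : ∀ (Z : Fin n → Ω → ℝ) (α β : Fin n → ℝ),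
      (∀ i ω, Z i ω = α i * ε (some i) ω + β i * ε none ω) → ∀ i,
      U Z i = -(α i ^ 2 * (1/τx) + β i ^ 2 * (1/τy))
        - (∑ j, G i j * (α j ^ 2 * (1/τx) + β j ^ 2 * (1/τy)))
        + 2 * (1/τy) * β i * ∑ j, G i j * β j := by
    intro Z α β hZ i
    have hZfun : ∀ j, Z j = fun ω => α j * ε (some j) ω + β j * ε none ω :=
      fun j => funext (hZ j)
    have hZmem : ∀ j, MemLp (Z j) 2 μ := by
      intro j; rw [hZfun j]
      exact ((hL2 (some j)).const_mul _).add ((hL2 none).const_mul _)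
    have hsq : ∀ j, Integrable (fun ω => (Z j ω) ^ 2) μ := fun j => (hZmem j).integrable_sq
    have hdsq : ∀ j, Integrable (fun ω => (Z i ω - Z j ω) ^ 2) μ := by
      intro j
      exact ((hZmem i).sub (hZmem j)).integrable_sq
    rw [hU]
    have hfun : (fun ω => -(1 - ∑ j ∈ Finset.univ.erase i, G i j) * (Z i ω) ^ 2
        - ∑ j ∈ Finset.univ.erase i, G i j * (Z i ω - Z j ω) ^ 2)
        = fun ω => (-(1 - ∑ j ∈ Finset.univ.erase i, G i j)) * (Z i ω) ^ 2
          - ∑ j ∈ Finset.univ.erase i, (fun j ω => G i j * (Z i ω - Z j ω) ^ 2) j ω := by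
      funext ω; simp
    rw [hfun, integral_sub ((hsq i).const_mul _)
        (integrable_finset_sum _ fun j _ => (hdsq j).const_mul _),
      integral_const_mul, integral_finset_sum _ fun j _ => (hdsq j).const_mul _]
    have hIi : ∫ ω, (Z i ω) ^ 2 ∂μ = α i ^ 2 * (1/τx) + β i ^ 2 * (1/τy) := by
      have h1 : (fun ω => (Z i ω) ^ 2)
          = fun ω => (α i * ε (some i) ω + β i * ε none ω) ^ 2 := by
        funext ω; rw [hZ]
      rw [h1, key2 _ _ (by simp) _ _, hvarx, hvary]
    have hIij : ∀ j ∈ Finset.univ.erase i,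
        ∫ ω, G i j * (Z i ω - Z j ω) ^ 2 ∂μ
          = G i j * (α i ^ 2 * (1/τx) + α j ^ 2 * (1/τx) + (β i - β j) ^ 2 * (1/τy)) := by
      intro j hj
      have hji : j ≠ i := Finset.ne_of_mem_erase hj
      rw [integral_const_mul]
      have h1 : (fun ω => (Z i ω - Z j ω) ^ 2)
          = fun ω => (α i * ε (some i) ω + (-(α j)) * ε (some j) ω
              + (β i - β j) * ε none ω) ^ 2 := by
        funext ω; rw [hZ, hZ]; ring
      rw [h1, key3 (some i) (some j) none (by simpa using hji.symm) (by simp) (by simp) _ _ _,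
        hvarx, hvarx, hvary]
      ring
    rw [hIi, Finset.sum_congr rfl hIij]
    have hd0 : ∑ j ∈ Finset.univ.erase i, G i j = ∑ j, G i j :=
      Finset.sum_erase _ (hdiag i)
    have herase : ∑ j ∈ Finset.univ.erase i,
        G i j * (α i ^ 2 * (1/τx) + α j ^ 2 * (1/τx) + (β i - β j) ^ 2 * (1/τy))
        = ∑ j, G i j * (α i ^ 2 * (1/τx) + α j ^ 2 * (1/τx) + (β i - β j) ^ 2 * (1/τy)) :=
      Finset.sum_erase _ (by rw [hdiag]; ring)
    rw [herase, hd0]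
    have hsplit : ∑ j, G i j * (α i ^ 2 * (1/τx) + α j ^ 2 * (1/τx) + (β i - β j) ^ 2 * (1/τy))
        = (∑ j, G i j) * (α i ^ 2 * (1/τx) + β i ^ 2 * (1/τy))
          + ∑ j, G i j * (α j ^ 2 * (1/τx) + β j ^ 2 * (1/τy))
          - 2 * (1/τy) * β i * ∑ j, G i j * β j := by
      rw [Finset.sum_mul, Finset.mul_sum, ← Finset.sum_add_distrib, ← Finset.sum_sub_distrib]
      exact Finset.sum_congr rfl fun j _ => by ring
    rw [hsplit]
    ring
  -- centrality identity
  have hdet : IsUnit (1 - γ • G).det := by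
    apply isUnit_iff_ne_zero.mpr
    apply det_ne_zero_of_sum_row_lt_diag
    intro k
    have h1 : ∀ j ∈ Finset.univ.erase k, ‖(1 - γ • G) k j‖ = γ * G k j := by
      intro j hj
      have hjk : j ≠ k := Finset.ne_of_mem_erase hj
      rw [Matrix.sub_apply, Matrix.smul_apply, Matrix.one_apply_ne' hjk, smul_eq_mul,
        zero_sub, norm_neg, Real.norm_eq_abs, abs_of_nonneg (mul_nonneg (le_of_lt hγ0) (hposG k j))]
    rw [Finset.sum_congr rfl h1, Matrix.sub_apply, Matrix.smul_apply, Matrix.one_apply_eq,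
      hdiag, smul_eq_mul, mul_zero, sub_zero, norm_one, ← Finset.mul_sum]
    have h2 : (0:ℝ) ≤ ∑ j ∈ Finset.univ.erase k, G k j :=
      Finset.sum_nonneg fun j _ => hposG k j
    nlinarith [hrow k]
  have hcent : ∀ i, c i = 1 + γ * ∑ j, G i j * c j := by
    have h1 : (1 - γ • G) *ᵥ c = fun _ => (1:ℝ) := by
      rw [hc, Matrix.mulVec_mulVec, Matrix.mul_nonsing_inv _ hdet, Matrix.one_mulVec]
    intro i
    have h2 := congrFun h1 i
    simp only [Matrix.mulVec, dotProduct, Matrix.sub_apply, Matrix.smul_apply,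
      Matrix.one_apply, smul_eq_mul, sub_mul, ite_mul, one_mul, zero_mul,
      Finset.sum_sub_distrib, Finset.sum_ite_eq, Finset.mem_univ, if_true] at h2
    have h3 : γ * ∑ j, G i j * c j = ∑ j, γ * G i j * c j := by
      rw [Finset.mul_sum]; exact Finset.sum_congr rfl fun j _ => by ring
    rw [h3]; linarith
  have hdinF : ∀ i, din i = ∑ j, G j i := by
    intro i; rw [hdin i]; exact Finset.sum_erase _ (hdiag i)
  -- the withheld-signal profile fits the two-noise pattern
  have hXdP : ∀ i ω, Xd i ω = (if i = e then γ else 1) * ε (some i) ω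
      + (if i = e then 1 - γ else 0) * ε none ω := by
    intro i ω
    by_cases h : i = e
    · subst h; rw [hXd1 ω]; simp
    · rw [hXdi i h ω]; simp [h]
  have hUX : ∀ i, U X i = -((1 - b i) ^ 2 * (1/τx) + (b i) ^ 2 * (1/τy))
      - (∑ j, G i j * ((1 - b j) ^ 2 * (1/τx) + (b j) ^ 2 * (1/τy)))
      + 2 * (1/τy) * b i * ∑ j, G i j * b j :=
    fun i => main X (fun i => 1 - b i) b hX i
  have hUXd : ∀ i, U Xd i
      = -((if i = e then γ else 1) ^ 2 * (1/τx) + (if i = e then 1 - γ else 0) ^ 2 * (1/τy))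
      - (∑ j, G i j * ((if j = e then γ else 1) ^ 2 * (1/τx)
          + (if j = e then 1 - γ else 0) ^ 2 * (1/τy)))
      + 2 * (1/τy) * (if i = e then 1 - γ else 0) * ∑ j, G i j * (if j = e then 1 - γ else 0) :=
    fun i => main Xd (fun i => if i = e then γ else 1) (fun i => if i = e then 1 - γ else 0)
      hXdP i
  -- auxiliary sum computations
  have hsBg : ∀ i, ∑ j, G i j * b j = (1 - γ) * ∑ j, G i j * c j := by
    intro i
    rw [Finset.mul_sum]
    exact Finset.sum_congr rfl fun j _ => by rw [hb j]; ring
  have hsC : ∀ i, ∑ j, G i j * ((if j = e then γ else 1) ^ 2 * (1/τx)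
      + (if j = e then 1 - γ else 0) ^ 2 * (1/τy))
      = (∑ j, G i j) * (1/τx) + G i e * ((γ ^ 2 - 1) * (1/τx) + (1 - γ) ^ 2 * (1/τy)) := by
    intro i
    rw [Finset.sum_mul]
    have h1 : ∀ j ∈ (Finset.univ : Finset (Fin n)),
        G i j * ((if j = e then γ else 1) ^ 2 * (1/τx)
          + (if j = e then 1 - γ else 0) ^ 2 * (1/τy))
        = G i j * (1/τx) + (if j = e then G i j * ((γ ^ 2 - 1) * (1/τx)
            + (1 - γ) ^ 2 * (1/τy)) else 0) := by
      intro j _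
      by_cases hj : j = e
      · simp only [hj, if_pos]; ring
      · simp only [hj, if_neg, ite_false]; ring
    rw [Finset.sum_congr rfl h1, Finset.sum_add_distrib, Finset.sum_ite_eq' Finset.univ e]
    simp
  have hsD : ∀ i, ∑ j, G i j * (if j = e then 1 - γ else 0) = G i e * (1 - γ) := by
    intro i
    have h1 : ∀ j ∈ (Finset.univ : Finset (Fin n)),
        G i j * (if j = e then 1 - γ else 0) = if j = e then G i j * (1 - γ) else 0 := by
      intro j _; by_cases hj : j = e <;> simp [hj]
    rw [Finset.sum_congr rfl h1, Finset.sum_ite_eq' Finset.univ e]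
    simp
  -- part 1 : the deviation gain of agent 1
  have hsA : ∀ i, ∑ j, G i j * ((1 - b j) ^ 2 * (1/τx) + (b j) ^ 2 * (1/τy))
      = (∑ j, G i j) * (1/τx) - (2 * (1 - γ) * (1/τx)) * (∑ j, G i j * c j)
        + ((1 - γ) ^ 2 * (1/τx) + (1 - γ) ^ 2 * (1/τy)) * (∑ j, G i j * c j ^ 2) := by
    intro i
    rw [Finset.sum_mul, Finset.mul_sum, Finset.mul_sum, ← Finset.sum_sub_distrib,
      ← Finset.sum_add_distrib]
    exact Finset.sum_congr rfl fun j _ => by rw [hb j]; ring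
  have hQ : ∑ j ∈ Finset.univ.erase e, G e j * (c j * (c j - 2))
      = (∑ j, G e j * c j ^ 2) - 2 * ∑ j, G e j * c j := by
    rw [Finset.sum_erase _ (by rw [hdiag]; ring), Finset.mul_sum, ← Finset.sum_sub_distrib]
    exact Finset.sum_congr rfl fun j _ => by ring
  have hτx' : τx ≠ 0 := ne_of_gt hτx
  have hτy' : τy ≠ 0 := ne_of_gt hτy
  have hτxy' : τx + τy ≠ 0 := ne_of_gt hτxy
  have hD1 : U Xd e - U X e
      = ((1 - γ)/τx) * (1 - ((c e) ^ 2
          - ∑ j ∈ Finset.univ.erase e, G e j * (c j * (c j - 2)))) := by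
    rw [hUXd e, hUX e, hQ, hsA e, hsBg e, hsC e, hsD e, hb e]
    simp only [↓reduceIte, hdiag e]
    rw [hcent e, hγ]
    field_simp
    ring
  -- part 2 : welfare sums
  have hSX : ∑ i, U X i = ∑ i, (-(1 + din i) * ((1 - b i) ^ 2 * (1/τx) + (b i) ^ 2 * (1/τy))
      + 2 * (1/τy) * b i * ((1 - γ) * ∑ j, G i j * c j)) := by
    have h1 : ∀ i ∈ (Finset.univ : Finset (Fin n)), U X i
        = (-((1 - b i) ^ 2 * (1/τx) + (b i) ^ 2 * (1/τy))
            + 2 * (1/τy) * b i * ((1 - γ) * ∑ j, G i j * c j))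
          - ∑ j, G i j * ((1 - b j) ^ 2 * (1/τx) + (b j) ^ 2 * (1/τy)) := by
      intro i _
      rw [hUX i, hsBg i]; ring
    rw [Finset.sum_congr rfl h1, Finset.sum_sub_distrib]
    have hswap : ∑ i, ∑ j, G i j * ((1 - b j) ^ 2 * (1/τx) + (b j) ^ 2 * (1/τy))
        = ∑ j, din j * ((1 - b j) ^ 2 * (1/τx) + (b j) ^ 2 * (1/τy)) := by
      rw [Finset.sum_comm]
      exact Finset.sum_congr rfl fun j _ => by rw [← Finset.sum_mul, ← hdinF j]
    rw [hswap, ← Finset.sum_sub_distrib]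
    exact Finset.sum_congr rfl fun i _ => by ring
  have hSXd : ∑ i, U Xd i = ∑ i, (-(1 + din i)
      * ((if i = e then γ else 1) ^ 2 * (1/τx) + (if i = e then 1 - γ else 0) ^ 2 * (1/τy))) := by
    have h1 : ∀ i ∈ (Finset.univ : Finset (Fin n)), U Xd i
        = -((if i = e then γ else 1) ^ 2 * (1/τx) + (if i = e then 1 - γ else 0) ^ 2 * (1/τy))
          - ∑ j, G i j * ((if j = e then γ else 1) ^ 2 * (1/τx)
              + (if j = e then 1 - γ else 0) ^ 2 * (1/τy)) := by
      intro i _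
      rw [hUXd i, hsD i]
      by_cases hi : i = e
      · simp only [hi, if_pos, hdiag e]; ring
      · simp only [hi, ite_false]; ring
    rw [Finset.sum_congr rfl h1, Finset.sum_sub_distrib]
    have hswap : ∑ i, ∑ j, G i j * ((if j = e then γ else 1) ^ 2 * (1/τx)
        + (if j = e then 1 - γ else 0) ^ 2 * (1/τy))
        = ∑ j, din j * ((if j = e then γ else 1) ^ 2 * (1/τx)
            + (if j = e then 1 - γ else 0) ^ 2 * (1/τy)) := by
      rw [Finset.sum_comm]
      exact Finset.sum_congr rfl fun j _ => by rw [← Finset.sum_mul, ← hdinF j]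
    rw [hswap, ← Finset.sum_sub_distrib]
    exact Finset.sum_congr rfl fun i _ => by ring
  have hD2 : (∑ i, U X i) - (∑ i, U Xd i)
      = ((1 - γ)/τx) * ((∑ i, c i * ((1 - din i) * c i + 2 * din i)) - 1 - din e) := by
    rw [hSX, hSXd, ← Finset.sum_sub_distrib]
    have hRHS : ((1 - γ)/τx) * ((∑ i, c i * ((1 - din i) * c i + 2 * din i)) - 1 - din e)
        = ∑ i, (((1 - γ)/τx) * (c i * ((1 - din i) * c i + 2 * din i))
            - (if i = e then ((1 - γ)/τx) * (1 + din i) else 0)) := by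
      rw [Finset.sum_sub_distrib, ← Finset.mul_sum, Finset.sum_ite_eq' Finset.univ e]
      simp only [Finset.mem_univ, if_true]
      ring
    rw [hRHS]
    refine Finset.sum_congr rfl fun i _ => ?_
    by_cases hi : i = e
    · subst hi
      simp only [↓reduceIte]
      rw [hb e, hcent e, hγ]
      field_simp
      ring
    · simp only [hi, ite_false]
      rw [hb i, hcent i, hγ]
      field_simp
      ring
  have hk : 0 < (1 - γ)/τx := div_pos (by linarith) hτx
  have h1 : (U X e < U Xd e) ↔ ((c e) ^ 2
      - ∑ j ∈ Finset.univ.erase e, G e j * (c j * (c j - 2)) < 1) := by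
    constructor
    · intro h
      have h2 : 0 < U Xd e - U X e := by linarith
      rw [hD1] at h2
      nlinarith [hk, h2]
    · intro h
      have h2 : 0 < ((1 - γ)/τx) * (1 - ((c e) ^ 2
          - ∑ j ∈ Finset.univ.erase e, G e j * (c j * (c j - 2)))) :=
        mul_pos hk (by linarith)
      rw [← hD1] at h2
      linarith
  have h2 : (∑ i, U Xd i < ∑ i, U X i)
      ↔ (1 + din e < ∑ i, c i * ((1 - din i) * c i + 2 * din i)) := by
    constructor
    · intro h
      have h2 : 0 < (∑ i, U X i) - ∑ i, U Xd i := by linarith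
      rw [hD2] at h2
      nlinarith [hk, h2]
    · intro h
      have h2 : 0 < ((1 - γ)/τx)
          * ((∑ i, c i * ((1 - din i) * c i + 2 * din i)) - 1 - din e) :=
        mul_pos hk (by linarith)
      rw [← hD2] at h2
      linarith
  exact and_congr h1 h2
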